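/- arXiv:2010.13591 — 2 statements merged into one kernel-verified Lean document; each statement's English description precedes it below -/
import Mathlib

section
/- Let f, g : [a, b] → ℝ be twice continuously differentiable, and let a ≤ p < q ≤ b with g(p) = f(p) and g(q) = f(q). Then for every x ∈ [p, q], |g(x) − f(x)| ≤ (∫_a^b (g''(v) − f''(v))² dv)^{1/2} · (q − p)^{3/2}. -/
open Set intervalIntegral

lemma ftc_aux {a b α β : ℝ} {φ φ' : ℝ → ℝ}
    (hαa : a ≤ α) (hαβ : α ≤ β) (hβb : β ≤ b)
    (hd : ∀ x ∈ Icc a b, HasDerivWithinAt φ (φ' x) (Icc a b) x)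
    (hi : IntervalIntegrable φ' MeasureTheory.volume α β) :
    ∫ y in α..β, φ' y = φ β - φ α := by
  apply intervalIntegral.integral_eq_sub_of_hasDeriv_right_of_le hαβ
  · intro x hx
    exact ((hd x ⟨hαa.trans hx.1, hx.2.trans hβb⟩).continuousWithinAt).mono
      (Icc_subset_Icc hαa hβb)
  · intro x hx
    have hx' : x ∈ Ioo a b := ⟨lt_of_le_of_lt hαa hx.1, lt_of_lt_of_le hx.2 hβb⟩
    exact (hd x (Ioo_subset_Icc_self hx')).mono_of_mem_nhdsWithin
      (mem_nhdsWithin_of_mem_nhds (Icc_mem_nhds hx'.1 hx'.2))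
  · exact hi

lemma cs_aux {α β : ℝ} {H : ℝ → ℝ} (hαβ : α ≤ β)
    (h1 : IntervalIntegrable H MeasureTheory.volume α β)
    (h2 : IntervalIntegrable (fun u => H u ^ 2) MeasureTheory.volume α β) :
    (∫ u in α..β, H u) ^ 2 ≤ (β - α) * ∫ u in α..β, H u ^ 2 := by
  set S := ∫ u in α..β, H u with hS
  set Q := ∫ u in α..β, H u ^ 2 with hQ
  have key : ∀ t : ℝ, 0 ≤ Q + 2 * t * S + t ^ 2 * (β - α) := by
    intro t
    have hnn : (0:ℝ) ≤ ∫ u in α..β, (H u + t) ^ 2 :=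
      intervalIntegral.integral_nonneg hαβ (fun u _ => sq_nonneg _)
    have h3 : IntervalIntegrable (fun u => 2 * t * H u) MeasureTheory.volume α β :=
      h1.const_mul _
    have h4 : IntervalIntegrable (fun _ : ℝ => t ^ 2) MeasureTheory.volume α β :=
      intervalIntegrable_const
    have expand : (∫ u in α..β, (H u + t) ^ 2)
        = Q + 2 * t * S + t ^ 2 * (β - α) := by
      have : (fun u => (H u + t) ^ 2)
          = (fun u => H u ^ 2 + 2 * t * H u + t ^ 2) := by
        funext u; ring
      rw [this, intervalIntegral.integral_add (h2.add h3) h4,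
        intervalIntegral.integral_add h2 h3, intervalIntegral.integral_const,
        intervalIntegral.integral_const_mul]
      simp [hS, hQ, smul_eq_mul]; ring
    linarith [expand ▸ hnn]
  rcases eq_or_lt_of_le hαβ with h | h
  · subst h
    simp [hS]
  · have hL : 0 < β - α := sub_pos.2 h
    have h1' := key (-(S / (β - α)))
    have h2' : 0 ≤ (β - α) * (Q + 2 * (-(S / (β - α))) * S
        + (-(S / (β - α))) ^ 2 * (β - α)) := mul_nonneg hL.le h1'
    have h3' : (β - α) * (Q + 2 * (-(S / (β - α))) * S
        + (-(S / (β - α))) ^ 2 * (β - α)) = (β - α) * Q - S ^ 2 := by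
      field_simp
      ring
    linarith [h3' ▸ h2']

/-- Equations (int1)–(int2) of the paper: if `f, g` are twice continuously differentiable on
`[a,b]` and agree at `p < q` in `[a,b]`, then for all `x ∈ [p,q]`,
`|g(x) − f(x)| ≤ (∫_a^b (g''−f'')²)^{1/2} (q−p)^{3/2}`. -/
theorem function_diff_bound_of_interpolation
    (a b p q : ℝ) (f f' f'' g g' g'' : ℝ → ℝ)
    (hap : a ≤ p) (hpq : p < q) (hqb : q ≤ b)
    (hfd : ∀ x ∈ Icc a b, HasDerivWithinAt f (f' x) (Icc a b) x)
    (hfd2 : ∀ x ∈ Icc a b, HasDerivWithinAt f' (f'' x) (Icc a b) x)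
    (hfc : ContinuousOn f'' (Icc a b))
    (hgd : ∀ x ∈ Icc a b, HasDerivWithinAt g (g' x) (Icc a b) x)
    (hgd2 : ∀ x ∈ Icc a b, HasDerivWithinAt g' (g'' x) (Icc a b) x)
    (hgc : ContinuousOn g'' (Icc a b))
    (hp : g p = f p) (hq : g q = f q) :
    ∀ x ∈ Icc p q,
      |g x - f x| ≤
        Real.sqrt (∫ v in a..b, (g'' v - f'' v) ^ 2) * (q - p) ^ ((3 : ℝ) / 2) := by
  intro x hx
  have hab : a ≤ b := hap.trans (hpq.le.trans hqb)
  have hsub : Icc p q ⊆ Icc a b := Icc_subset_Icc hap hqb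
  set H : ℝ → ℝ := fun v => g'' v - f'' v with hHdef
  set I : ℝ := ∫ v in a..b, (g'' v - f'' v) ^ 2 with hIdef
  have hHc : ContinuousOn H (Icc a b) := hgc.sub hfc
  have hH2c : ContinuousOn (fun u => H u ^ 2) (Icc a b) := hHc.pow 2
  have hInn : 0 ≤ I :=
    intervalIntegral.integral_nonneg hab (fun u _ => sq_nonneg _)
  have hqp : (0:ℝ) < q - p := sub_pos.2 hpq
  -- derivative data for φ = g - f and φ' = g' - f'
  have hφd : ∀ y ∈ Icc a b,
      HasDerivWithinAt (fun y => g y - f y) (g' y - f' y) (Icc a b) y :=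
    fun y hy => (hgd y hy).sub (hfd y hy)
  have hφ'd : ∀ y ∈ Icc a b,
      HasDerivWithinAt (fun y => g' y - f' y) (H y) (Icc a b) y :=
    fun y hy => (hgd2 y hy).sub (hfd2 y hy)
  have hφ'c : ContinuousOn (fun y => g' y - f' y) (Icc a b) :=
    fun y hy => ((hφ'd y hy).continuousWithinAt)
  -- Rolle
  obtain ⟨c, hcmem, hc0⟩ :=
    exists_hasDerivAt_eq_zero (f := fun y => g y - f y)
      (f' := fun y => g' y - f' y) hpq
      (fun y hy => ((hφd y (hsub hy)).continuousWithinAt).mono hsub)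
      (by simp [hp, hq])
      (fun y hy => (hφd y (hsub (Ioo_subset_Icc_self hy))).hasDerivAt
        (Icc_mem_nhds (lt_of_le_of_lt hap hy.1) (lt_of_lt_of_le hy.2 hqb)))
  have hcq : c ∈ Icc p q := Ioo_subset_Icc_self hcmem
  -- derivative bound
  have hbound : ∀ y ∈ Icc p q,
      |g' y - f' y| ≤ Real.sqrt I * Real.sqrt (q - p) := by
    intro y hy
    set α := min c y with hα
    set β := max c y with hβ
    have hαβ : α ≤ β := min_le_max
    have hpα : p ≤ α := le_min hcq.1 hy.1
    have hβq : β ≤ q := max_le hcq.2 hy.2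
    have haα : a ≤ α := hap.trans hpα
    have hβb : β ≤ b := hβq.trans hqb
    have hIcc : Icc α β ⊆ Icc a b := Icc_subset_Icc haα hβb
    have hiH : IntervalIntegrable H MeasureTheory.volume α β :=
      (hHc.mono hIcc).intervalIntegrable_of_Icc hαβ
    have hiH2 : IntervalIntegrable (fun u => H u ^ 2) MeasureTheory.volume α β :=
      (hH2c.mono hIcc).intervalIntegrable_of_Icc hαβ
    have hftc : ∫ u in α..β, H u = (g' β - f' β) - (g' α - f' α) :=
      ftc_aux haα hαβ hβb hφ'd hiH
    have habs : |g' y - f' y| = |∫ u in α..β, H u| := by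
      rcases le_total c y with h | h
      · rw [hftc]
        simp only [hα, hβ, min_eq_left h, max_eq_right h]
        rw [hc0]
        simp
      · rw [hftc]
        simp only [hα, hβ, min_eq_right h, max_eq_left h]
        rw [hc0]
        simp [abs_sub_comm]
    have cs := cs_aux hαβ hiH hiH2
    have hQnn : 0 ≤ ∫ u in α..β, H u ^ 2 :=
      intervalIntegral.integral_nonneg hαβ (fun u _ => sq_nonneg _)
    have hQle : (∫ u in α..β, H u ^ 2) ≤ I := by
      rw [hIdef]
      exact intervalIntegral.integral_mono_interval haα hαβ hβb
        (Filter.Eventually.of_forall fun u => sq_nonneg _)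
        ((hHc.pow 2).intervalIntegrable_of_Icc hab)
    have hlen : β - α ≤ q - p := by
      have := hpα; have := hβq; linarith
    have h1 : (∫ u in α..β, H u) ^ 2 ≤ (q - p) * I := by
      calc (∫ u in α..β, H u) ^ 2 ≤ (β - α) * ∫ u in α..β, H u ^ 2 := cs
        _ ≤ (q - p) * I :=
          mul_le_mul hlen hQle hQnn hqp.le
    have h2 : |∫ u in α..β, H u| ≤ Real.sqrt ((q - p) * I) := by
      rw [← Real.sqrt_sq_eq_abs]
      exact Real.sqrt_le_sqrt h1
    rw [habs]
    calc |∫ u in α..β, H u| ≤ Real.sqrt ((q - p) * I) := h2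
      _ = Real.sqrt I * Real.sqrt (q - p) := by
          rw [Real.sqrt_mul hqp.le, mul_comm]
  -- FTC for g - f on [p, x]
  have hpx : p ≤ x := hx.1
  have hxb : x ≤ b := hx.2.trans hqb
  have hiφ' : IntervalIntegrable (fun u => g' u - f' u) MeasureTheory.volume p x :=
    (hφ'c.mono (Icc_subset_Icc hap hxb)).intervalIntegrable_of_Icc hpx
  have hmain : ∫ u in p..x, (g' u - f' u) = g x - f x := by
    rw [ftc_aux hap hpx hxb hφd hiφ', hp]
    ring
  have hC : 0 ≤ Real.sqrt I * Real.sqrt (q - p) :=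
    mul_nonneg (Real.sqrt_nonneg _) (Real.sqrt_nonneg _)
  have hnorm : ‖∫ u in p..x, (g' u - f' u)‖ ≤
      Real.sqrt I * Real.sqrt (q - p) * |x - p| := by
    apply intervalIntegral.norm_integral_le_of_norm_le_const
    intro u hu
    rw [uIoc_of_le hpx] at hu
    exact hbound u ⟨hu.1.le, hu.2.trans hx.2⟩
  rw [← hmain]
  have hxp : |x - p| ≤ q - p := by
    rw [abs_of_nonneg (by linarith)]
    linarith [hx.2]
  calc |∫ u in p..x, (g' u - f' u)| ≤ Real.sqrt I * Real.sqrt (q - p) * |x - p| := hnorm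
    _ ≤ Real.sqrt I * Real.sqrt (q - p) * (q - p) :=
        mul_le_mul_of_nonneg_left hxp hC
    _ = Real.sqrt I * (q - p) ^ ((3:ℝ)/2) := by
        rw [mul_assoc]
        congr 1
        rw [Real.sqrt_eq_rpow]
        calc (q - p) ^ ((1:ℝ)/2) * (q - p)
            = (q - p) ^ ((1:ℝ)/2) * (q - p) ^ (1:ℝ) := by rw [Real.rpow_one]
          _ = (q - p) ^ ((3:ℝ)/2) := by rw [← Real.rpow_add hqp]; norm_num
end

section
/- Let X = ∏_{i=1}^d [a_i, b_i] with a_i < b_i for each i. For each i ∈ {1,…,d}, let a_i = x_{1i} < x_{2i} < ⋯ < x_{ñ_i i} = b_i be grid points of [a_i, b_i], let h_i = max_{1≤j≤ñ_i−1} (x_{(j+1)i} − x_{ji}), and let h = max_{1≤i≤d} h_i. Let f, g : X → ℝ be twice continuously differentiable with all second-order partial derivatives bounded in absolute value by M > 0 on X, and suppose g(x) = f(x) for every x ∈ X having at least one coordinate x_i equal to a grid point x_{ji}. Then sup_{x ∈ X} ‖∇g(x) − ∇f(x)‖ ≤ 2M (∑_{i=1}^d (b_i − a_i))^{1/2} ·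 √h, where ∇ denotes the gradient and ‖·‖ the Euclidean norm on ℝ^d. -/
open Set

/-- Deterministic content of Theorem 3 of the paper: if `g` interpolates `f` on all hyperplane
slices through the grid points of a box `X = ∏ [aᵢ, bᵢ]` of mesh at most `h`, and both functions
are twice continuously differentiable with all second-order partial derivatives bounded by `M`,
then `sup_{x ∈ X} ‖∇g(x) − ∇f(x)‖ ≤ 2M (∑ᵢ (bᵢ − aᵢ))^{1/2} √h`. -/
theorem gradient_uniform_rate_on_grid
    (d : ℕ) (hd : 0 < d) (a b : Fin d → ℝ) (hab : ∀ i, a i < b i)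
    (X : Set (EuclideanSpace ℝ (Fin d)))
    (hXdef : X = {x : EuclideanSpace ℝ (Fin d) | ∀ i, x i ∈ Icc (a i) (b i)})
    (m : Fin d → ℕ) (hm : ∀ i, 2 ≤ m i)
    (grid : (i : Fin d) → Fin (m i) → ℝ)
    (hmono : ∀ i, StrictMono (grid i))
    (hfirst : ∀ i, grid i ⟨0, by have := hm i; omega⟩ = a i)
    (hlast : ∀ i, grid i ⟨m i - 1, by have := hm i; omega⟩ = b i)
    (h : ℝ)
    (hmesh : ∀ i, ∀ j k : Fin (m i), (k : ℕ) = (j : ℕ) + 1 → grid i k - grid i j ≤ h)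
    (M : ℝ) (hM : 0 < M)
    (f g : EuclideanSpace ℝ (Fin d) → ℝ)
    (hf : ContDiffOn ℝ 2 f X) (hg : ContDiffOn ℝ 2 g X)
    (hfbd : ∀ x ∈ X, ∀ i j : Fin d,
      |fderivWithin ℝ (fun y => fderivWithin ℝ f X y (EuclideanSpace.single i 1)) X x
        (EuclideanSpace.single j 1)| ≤ M)
    (hgbd : ∀ x ∈ X, ∀ i j : Fin d,
      |fderivWithin ℝ (fun y => fderivWithin ℝ g X y (EuclideanSpace.single i 1)) X x
        (EuclideanSpace.single j 1)| ≤ M)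
    (hinterp : ∀ x ∈ X, (∃ i : Fin d, ∃ j : Fin (m i), x i = grid i j) → g x = f x) :
    ∀ x ∈ X,
      Real.sqrt (∑ i : Fin d,
          (fderivWithin ℝ g X x (EuclideanSpace.single i 1)
            - fderivWithin ℝ f X x (EuclideanSpace.single i 1)) ^ 2)
        ≤ 2 * M * Real.sqrt (∑ i : Fin d, (b i - a i)) * Real.sqrt h := by
  intro x hx
  have hXmem : ∀ y : EuclideanSpace ℝ (Fin d), y ∈ X ↔ ∀ i, y i ∈ Icc (a i) (b i) := by
    intro y; rw [hXdef]; exact Iff.rfl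
  have hXconv : Convex ℝ X := by
    intro p hp q hq α β hα hβ hαβ
    rw [hXmem] at hp hq ⊢
    intro i
    have h1 := (convex_Icc (a i) (b i)) (hp i) (hq i) hα hβ hαβ
    simpa [PiLp.add_apply, PiLp.smul_apply, smul_eq_mul] using h1
  have coord_le : ∀ (y z : EuclideanSpace ℝ (Fin d)) (i : Fin d), |y i - z i| ≤ dist y z := by
    intro y z i
    rw [EuclideanSpace.dist_eq]
    have h1 : |y i - z i| = Real.sqrt (dist (y i) (z i) ^ 2) := by
      rw [Real.sqrt_sq_eq_abs, Real.dist_eq, abs_abs]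
    rw [h1]
    exact Real.sqrt_le_sqrt (Finset.single_le_sum (f := fun j => dist (y j) (z j) ^ 2)
      (fun j _ => sq_nonneg _) (Finset.mem_univ i))
  have hint : (interior X).Nonempty := by
    obtain ⟨i0, -, hi0⟩ := Finset.exists_min_image Finset.univ (fun i => (b i - a i) / 2)
      ⟨⟨0, hd⟩, Finset.mem_univ _⟩
    have hr : (0:ℝ) < (b i0 - a i0) / 2 := by linarith [hab i0]
    set c : EuclideanSpace ℝ (Fin d) := WithLp.toLp 2 (fun i => (a i + b i) / 2 : Fin d → ℝ) with hcdef
    refine ⟨c, mem_interior.2 ⟨Metric.ball c ((b i0 - a i0) / 2), ?_, Metric.isOpen_ball,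
      Metric.mem_ball_self hr⟩⟩
    intro y hy
    rw [hXmem]
    intro i
    have h1 : |y i - c i| < (b i0 - a i0) / 2 := lt_of_le_of_lt (coord_le y c i) hy
    have h2 : (b i0 - a i0) / 2 ≤ (b i - a i) / 2 := hi0 i (Finset.mem_univ i)
    have hci : c i = (a i + b i) / 2 := rfl
    rw [hci] at h1
    have h3 := abs_lt.1 h1
    constructor <;> [linarith [h3.1]; linarith [h3.2]]
  have hXuniq : UniqueDiffOn ℝ X := uniqueDiffOn_convex hXconv hint
  have hh0 : (0:ℝ) ≤ h := by
    have hmi := hm ⟨0, hd⟩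
    have h1 := hmesh ⟨0, hd⟩ ⟨0, by omega⟩ ⟨1, by omega⟩ rfl
    have h2 := hmono ⟨0, hd⟩ (show (⟨0, by omega⟩ : Fin (m ⟨0, hd⟩)) < ⟨1, by omega⟩ by
      rw [Fin.mk_lt_mk]; omega)
    linarith
  have hFdiff : ∀ (F : EuclideanSpace ℝ (Fin d) → ℝ), ContDiffOn ℝ 2 F X → ∀ i : Fin d,
      DifferentiableOn ℝ (fun y => fderivWithin ℝ F X y (EuclideanSpace.single i 1)) X := by
    intro F hF i
    have h1 : ContDiffOn ℝ 1 (fderivWithin ℝ F X) X := hF.fderivWithin hXuniq (by norm_num)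
    exact (h1.differentiableOn one_ne_zero).clm_apply (differentiableOn_const _)
  have key : ∀ i : Fin d,
      (fderivWithin ℝ g X x (EuclideanSpace.single i 1)
        - fderivWithin ℝ f X x (EuclideanSpace.single i 1)) ^ 2
      ≤ 4 * M ^ 2 * h * (b i - a i) := by
    intro i
    have hxiIcc : x i ∈ Icc (a i) (b i) := (hXmem x).1 hx i
    set L : ℝ → EuclideanSpace ℝ (Fin d) :=
      fun t => x + (t - x i) • EuclideanSpace.single i 1 with hLdef
    have hLi : ∀ t, L t i = t := by
      intro t
      simp [hLdef, PiLp.add_apply, PiLp.smul_apply, EuclideanSpace.single_apply]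
    have hLj : ∀ t (j : Fin d), j ≠ i → L t j = x j := by
      intro t j hj
      simp [hLdef, PiLp.add_apply, PiLp.smul_apply, EuclideanSpace.single_apply, hj]
    have hLx : L (x i) = x := by simp [hLdef]
    have hLmem : ∀ t ∈ Icc (a i) (b i), L t ∈ X := by
      intro t ht
      rw [hXmem]
      intro j
      by_cases hj : j = i
      · subst hj; rw [hLi]; exact ht
      · rw [hLj t j hj]; exact (hXmem x).1 hx j
    have hLd : ∀ t : ℝ, HasDerivAt L (EuclideanSpace.single i 1) t := by
      intro t
      have h1 : HasDerivAt (fun s : ℝ => s - x i) 1 t := (hasDerivAt_id t).sub_const _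
      have h2 := (h1.smul_const (EuclideanSpace.single i (1:ℝ))).const_add x
      simpa [hLdef] using h2
    have hcomp : ∀ (F : EuclideanSpace ℝ (Fin d) → ℝ), DifferentiableOn ℝ F X →
        ∀ t ∈ Icc (a i) (b i),
        HasDerivWithinAt (fun s => F (L s))
          (fderivWithin ℝ F X (L t) (EuclideanSpace.single i 1)) (Icc (a i) (b i)) t := by
      intro F hF t ht
      have h1 : HasFDerivWithinAt F (fderivWithin ℝ F X (L t)) X (L t) :=
        (hF (L t) (hLmem t ht)).hasFDerivWithinAt
      exact h1.comp_hasDerivWithinAt t (hLd t).hasDerivWithinAt (fun s hs => hLmem s hs)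
    set ψ : ℝ → ℝ := fun t => g (L t) - f (L t) with hψdef
    set D : ℝ → ℝ := fun t => fderivWithin ℝ g X (L t) (EuclideanSpace.single i 1)
      - fderivWithin ℝ f X (L t) (EuclideanSpace.single i 1) with hDdef
    set D' : ℝ → ℝ := fun t =>
      fderivWithin ℝ (fun y => fderivWithin ℝ g X y (EuclideanSpace.single i 1)) X (L t)
        (EuclideanSpace.single i 1)
      - fderivWithin ℝ (fun y => fderivWithin ℝ f X y (EuclideanSpace.single i 1)) X (L t)
        (EuclideanSpace.single i 1) with hD'def
    have hψd : ∀ t ∈ Icc (a i) (b i), HasDerivWithinAt ψ (D t) (Icc (a i) (b i)) t := by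
      intro t ht
      have h1 := (hcomp g (hg.differentiableOn two_ne_zero) t ht).sub
        (hcomp f (hf.differentiableOn two_ne_zero) t ht)
      rw [hψdef, hDdef]
      exact h1
    have hDd : ∀ t ∈ Icc (a i) (b i), HasDerivWithinAt D (D' t) (Icc (a i) (b i)) t := by
      intro t ht
      have h1 := (hcomp _ (hFdiff g hg i) t ht).sub (hcomp _ (hFdiff f hf i) t ht)
      rw [hDdef, hD'def]
      exact h1
    have hD'bd : ∀ t ∈ Icc (a i) (b i), ‖D' t‖ ≤ 2 * M := by
      intro t ht
      have h1 := hgbd (L t) (hLmem t ht) i i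
      have h2 := hfbd (L t) (hLmem t ht) i i
      simp only [hD'def, Real.norm_eq_abs]
      have h3 := abs_sub
        (fderivWithin ℝ (fun y => fderivWithin ℝ g X y (EuclideanSpace.single i 1)) X (L t)
          (EuclideanSpace.single i 1))
        (fderivWithin ℝ (fun y => fderivWithin ℝ f X y (EuclideanSpace.single i 1)) X (L t)
          (EuclideanSpace.single i 1))
      linarith
    -- find the grid interval containing x i
    obtain ⟨j, k, hkj, hjl, hjr⟩ : ∃ j k : Fin (m i), (k : ℕ) = (j : ℕ) + 1 ∧
        grid i j ≤ x i ∧ x i ≤ grid i k := by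
      have hmi := hm i
      by_cases hcase : x i = b i
      · refine ⟨⟨m i - 2, by omega⟩, ⟨m i - 1, by omega⟩, by show m i - 1 = m i - 2 + 1; omega,
          ?_, ?_⟩
        · rw [hcase, ← hlast i]
          exact (hmono i).monotone (by rw [Fin.mk_le_mk]; omega)
        · rw [hcase, ← hlast i]
      · have hxb : x i < b i := lt_of_le_of_ne hxiIcc.2 hcase
        have hS : (Finset.univ.filter (fun j : Fin (m i) => grid i j ≤ x i)).Nonempty := by
          refine ⟨⟨0, by omega⟩, ?_⟩
          simp only [Finset.mem_filter, Finset.mem_univ, true_and]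
          exact le_of_eq_of_le (hfirst i) hxiIcc.1
        set j0 := (Finset.univ.filter (fun j : Fin (m i) => grid i j ≤ x i)).max' hS with hj0def
        have hj0mem := Finset.max'_mem _ hS
        rw [Finset.mem_filter] at hj0mem
        have hj0le : grid i j0 ≤ x i := hj0mem.2
        have hj0lt : (j0 : ℕ) + 1 < m i := by
          by_contra hcon
          have hlt := j0.isLt
          have hj0eq : j0 = ⟨m i - 1, by omega⟩ := Fin.ext (by show (j0 : ℕ) = m i - 1; omega)
          rw [hj0eq, hlast i] at hj0le
          linarith
        refine ⟨j0, ⟨(j0 : ℕ) + 1, hj0lt⟩, rfl, hj0le, ?_⟩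
        by_contra hcon
        push_neg at hcon
        have hmem2 : (⟨(j0 : ℕ) + 1, hj0lt⟩ : Fin (m i)) ∈
            Finset.univ.filter (fun j : Fin (m i) => grid i j ≤ x i) := by
          simp only [Finset.mem_filter, Finset.mem_univ, true_and]
          exact le_of_lt hcon
        have h4 := Finset.le_max' _ _ hmem2
        rw [← hj0def, Fin.le_def] at h4
        simp only [] at h4
        omega
    have hjlt : grid i j < grid i k := hmono i (by rw [Fin.lt_def]; omega)
    have hga : a i ≤ grid i j := by
      rw [← hfirst i]
      exact (hmono i).monotone (by rw [Fin.le_def]; show 0 ≤ (j : ℕ); omega)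
    have hgb : grid i k ≤ b i := by
      have hlt := k.isLt
      rw [← hlast i]
      exact (hmono i).monotone (by rw [Fin.le_def]; show (k : ℕ) ≤ m i - 1; omega)
    have hIccsub : Icc (grid i j) (grid i k) ⊆ Icc (a i) (b i) := Icc_subset_Icc hga hgb
    have hψzero : ∀ l : Fin (m i), grid i l ∈ Icc (a i) (b i) → ψ (grid i l) = 0 := by
      intro l hl
      have h1 := hinterp _ (hLmem _ hl) ⟨i, l, by rw [hLi]⟩
      rw [hψdef]
      simp only []
      rw [h1, sub_self]
    have hcont : ContinuousOn ψ (Icc (grid i j) (grid i k)) := fun t ht =>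
      ((hψd t (hIccsub ht)).continuousWithinAt).mono hIccsub
    have heq : ψ (grid i j) = ψ (grid i k) := by
      rw [hψzero j ⟨hga, le_trans (le_of_lt hjlt) hgb⟩,
        hψzero k ⟨le_trans hga (le_of_lt hjlt), hgb⟩]
    have hder : ∀ t ∈ Ioo (grid i j) (grid i k), HasDerivAt ψ (D t) t := by
      intro t ht
      have h1 : t ∈ Icc (a i) (b i) := hIccsub (Ioo_subset_Icc_self ht)
      exact (hψd t h1).hasDerivAt
        (Icc_mem_nhds (lt_of_le_of_lt hga ht.1) (lt_of_lt_of_le ht.2 hgb))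
    obtain ⟨ξ, hξmem, hξ0⟩ := exists_hasDerivAt_eq_zero hjlt hcont heq hder
    have hξIcc : ξ ∈ Icc (a i) (b i) := hIccsub (Ioo_subset_Icc_self hξmem)
    have hmvt := Convex.norm_image_sub_le_of_norm_hasDerivWithin_le hDd hD'bd
      (convex_Icc (a i) (b i)) hξIcc hxiIcc
    have hA : |fderivWithin ℝ g X x (EuclideanSpace.single i 1)
        - fderivWithin ℝ f X x (EuclideanSpace.single i 1)| ≤ 2 * M * |x i - ξ| := by
      rw [hξ0, sub_zero] at hmvt
      simp only [hDdef, hLx, Real.norm_eq_abs] at hmvt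
      exact hmvt
    have hr0 : (0:ℝ) ≤ |x i - ξ| := abs_nonneg _
    have hrh : |x i - ξ| ≤ h := by
      have h1 := hmesh i j k hkj
      rw [abs_sub_le_iff]
      constructor <;> [linarith [hξmem.1, hξmem.2]; linarith [hξmem.1, hξmem.2]]
    have hrb : |x i - ξ| ≤ b i - a i := by
      rw [abs_sub_le_iff]
      constructor <;> [linarith [hxiIcc.1, hxiIcc.2, hξIcc.1, hξIcc.2];
        linarith [hxiIcc.1, hxiIcc.2, hξIcc.1, hξIcc.2]]
    nlinarith [hA, sq_abs (fderivWithin ℝ g X x (EuclideanSpace.single i 1)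
        - fderivWithin ℝ f X x (EuclideanSpace.single i 1)),
      abs_nonneg (fderivWithin ℝ g X x (EuclideanSpace.single i 1)
        - fderivWithin ℝ f X x (EuclideanSpace.single i 1)),
      mul_le_mul hrh hrb hr0 hh0, hM.le, mul_self_le_mul_self (abs_nonneg
        (fderivWithin ℝ g X x (EuclideanSpace.single i 1)
        - fderivWithin ℝ f X x (EuclideanSpace.single i 1))) hA]
  have hT : (0:ℝ) ≤ ∑ i : Fin d, (b i - a i) :=
    Finset.sum_nonneg fun i _ => by linarith [hab i]
  have hsum : (∑ i : Fin d, (fderivWithin ℝ g X x (EuclideanSpace.single i 1)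
        - fderivWithin ℝ f X x (EuclideanSpace.single i 1)) ^ 2)
      ≤ 4 * M ^ 2 * h * (∑ i : Fin d, (b i - a i)) := by
    rw [Finset.mul_sum]
    exact Finset.sum_le_sum fun i _ => key i
  calc Real.sqrt (∑ i : Fin d, (fderivWithin ℝ g X x (EuclideanSpace.single i 1)
        - fderivWithin ℝ f X x (EuclideanSpace.single i 1)) ^ 2)
      ≤ Real.sqrt (4 * M ^ 2 * h * (∑ i : Fin d, (b i - a i))) := Real.sqrt_le_sqrt hsum
    _ = 2 * M * Real.sqrt (∑ i : Fin d, (b i - a i)) * Real.sqrt h := by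
        have h1 : (2 * M * Real.sqrt (∑ i : Fin d, (b i - a i)) * Real.sqrt h) ^ 2
            = 4 * M ^ 2 * h * (∑ i : Fin d, (b i - a i)) := by
          rw [mul_pow, mul_pow, Real.sq_sqrt hT, Real.sq_sqrt hh0]
          ring
        rw [← h1, Real.sqrt_sq (by positivity)]
end
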